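/- Let X be a Hilbert space and let E, F be Banach spaces. Let K : X → E and L : X → F be bounded linear operators and assume that L is surjective. Then the restriction K|_{ker L} : ker L → E and the operator K ⊕ L : X → E ⊕ F, u ↦ (Ku, Lu), have equal index. -/

import Mathlib

/-- A bounded linear operator between Banach spaces is *Fredholm* if its kernel is
finite-dimensional and its range is closed and of finite codimension. -/
def IsFredholm {E F : Type*} [NormedAddCommGroup E] [NormedSpace ℂ E]
    [NormedAddCommGroup F] [NormedSpace ℂ F] (T : E →L[ℂ] F) : Prop :=
  FiniteDimensional ℂ (LinearMap.ker (T : E →ₗ[ℂ] F)) ∧ IsClosed (LinearMap.range (T : E →ₗ[ℂ] F) : Set F) ∧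
    FiniteDimensional ℂ (F ⧸ LinearMap.range (T : E →ₗ[ℂ] F))

/-- The index of a (Fredholm) operator: `dim ker T - codim ran T`. -/
noncomputable def fredholmIndex {E F : Type*} [NormedAddCommGroup E] [NormedSpace ℂ E]
    [NormedAddCommGroup F] [NormedSpace ℂ F] (T : E →L[ℂ] F) : ℤ :=
  (Module.finrank ℂ (LinearMap.ker (T : E →ₗ[ℂ] F)) : ℤ) - (Module.finrank ℂ (F ⧸ LinearMap.range (T : E →ₗ[ℂ] F)) : ℤ)

/-- Two bounded operators *have equal index* if either both are Fredholm with the same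
index, or neither is Fredholm. -/
def EqualIndex {E F E' F' : Type*} [NormedAddCommGroup E] [NormedSpace ℂ E]
    [NormedAddCommGroup F] [NormedSpace ℂ F] [NormedAddCommGroup E'] [NormedSpace ℂ E']
    [NormedAddCommGroup F'] [NormedSpace ℂ F'] (T : E →L[ℂ] F) (S : E' →L[ℂ] F') : Prop :=
  (IsFredholm T ∧ IsFredholm S ∧ fredholmIndex T = fredholmIndex S) ∨
    (¬ IsFredholm T ∧ ¬ IsFredholm S)

section Aux

variable {X E F : Type*} [NormedAddCommGroup X] [NormedSpace ℂ X]
  [NormedAddCommGroup E] [NormedSpace ℂ E]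
  [NormedAddCommGroup F] [NormedSpace ℂ F]

/-- Kernel equivalence: `ker (K|_{ker L}) ≃ ker (K ⊕ L)`. -/
noncomputable def kerEquivBB (K : X →L[ℂ] E) (L : X →L[ℂ] F) :
    LinearMap.ker (K.comp (Submodule.subtypeL (LinearMap.ker (L : X →ₗ[ℂ] F))) : LinearMap.ker (L : X →ₗ[ℂ] F) →ₗ[ℂ] E) ≃ₗ[ℂ]
      LinearMap.ker (K.prod L : X →ₗ[ℂ] E × F) where
  toFun x := ⟨((x : LinearMap.ker (L : X →ₗ[ℂ] F)) : X), by
    have h1 : K ((x : LinearMap.ker (L : X →ₗ[ℂ] F)) : X) = 0 := x.2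
    have h2 : L ((x : LinearMap.ker (L : X →ₗ[ℂ] F)) : X) = 0 := (x : LinearMap.ker (L : X →ₗ[ℂ] F)).2
    have : (K.prod L) ((x : LinearMap.ker (L : X →ₗ[ℂ] F)) : X) = 0 := by
      simp [ContinuousLinearMap.prod_apply, h1, h2, Prod.ext_iff]
    exact LinearMap.mem_ker.mpr this⟩
  map_add' _ _ := rfl
  map_smul' _ _ := rfl
  invFun y := ⟨⟨(y : X), by
      have h : (K.prod L) (y : X) = 0 := y.2
      have h2 : L (y : X) = 0 := congrArg Prod.snd h
      exact LinearMap.mem_ker.mpr h2⟩, by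
      have h : (K.prod L) (y : X) = 0 := y.2
      have h1 : K (y : X) = 0 := congrArg Prod.fst h
      exact LinearMap.mem_ker.mpr h1⟩
  left_inv x := by ext; rfl
  right_inv y := rfl

lemma mem_rangeT_iff_BB (K : X →L[ℂ] E) (L : X →L[ℂ] F) (e : E) :
    e ∈ LinearMap.range (K.comp (Submodule.subtypeL (LinearMap.ker (L : X →ₗ[ℂ] F))) : LinearMap.ker (L : X →ₗ[ℂ] F) →ₗ[ℂ] E) ↔
      ((e, 0) : E × F) ∈ LinearMap.range (K.prod L : X →ₗ[ℂ] E × F) := by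
  constructor
  · rintro ⟨⟨n, hn⟩, rfl⟩
    refine ⟨n, ?_⟩
    have hLn : L n = 0 := LinearMap.mem_ker.mp hn
    show (K n, L n) = _
    exact Prod.ext_iff.mpr ⟨rfl, hLn⟩
  · rintro ⟨u, hu⟩
    have h1 : K u = e := congrArg Prod.fst hu
    have h2 : L u = 0 := congrArg Prod.snd hu
    exact ⟨⟨u, LinearMap.mem_ker.mpr h2⟩, h1⟩

lemma rangeT_eq_BB (K : X →L[ℂ] E) (L : X →L[ℂ] F) :
    (LinearMap.range (K.comp (Submodule.subtypeL (LinearMap.ker (L : X →ₗ[ℂ] F))) : LinearMap.ker (L : X →ₗ[ℂ] F) →ₗ[ℂ] E) : Set E) =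
      (ContinuousLinearMap.inl ℂ E F) ⁻¹' (LinearMap.range (K.prod L : X →ₗ[ℂ] E × F) : Set (E × F)) := by
  ext e
  simp only [Set.mem_preimage, SetLike.mem_coe, ContinuousLinearMap.inl_apply]
  exact mem_rangeT_iff_BB K L e

lemma rangeS_eq_BB (K : X →L[ℂ] E) (L : X →L[ℂ] F) (R : F →L[ℂ] X)
    (hR : ∀ f, L (R f) = f) :
    (LinearMap.range (K.prod L : X →ₗ[ℂ] E × F) : Set (E × F)) =
      (ContinuousLinearMap.fst ℂ E F - (K.comp R).comp (ContinuousLinearMap.snd ℂ E F)) ⁻¹'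
        (LinearMap.range (K.comp (Submodule.subtypeL (LinearMap.ker (L : X →ₗ[ℂ] F))) : LinearMap.ker (L : X →ₗ[ℂ] F) →ₗ[ℂ] E) : Set E) := by
  ext ⟨e, f⟩
  simp only [Set.mem_preimage, SetLike.mem_coe, ContinuousLinearMap.coe_sub', Pi.sub_apply,
    ContinuousLinearMap.coe_comp', Function.comp_apply, ContinuousLinearMap.coe_fst',
    ContinuousLinearMap.coe_snd']
  constructor
  · rintro ⟨u, hu⟩
    have h1 : K u = e := congrArg Prod.fst hu
    have h2 : L u = f := congrArg Prod.snd hu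
    refine ⟨⟨u - R f, LinearMap.mem_ker.mpr ?_⟩, ?_⟩
    · simp only [map_sub, ContinuousLinearMap.coe_coe, h2, hR f, sub_self]
    · show K (u - R f) = e - K (R f)
      rw [map_sub, h1]
  · rintro ⟨⟨n, hn⟩, h⟩
    have hLn : L n = 0 := LinearMap.mem_ker.mp hn
    have hKn : K n = e - K (R f) := h
    refine ⟨n + R f, Prod.ext_iff.mpr ⟨?_, ?_⟩⟩
    · show K (n + R f) = e
      rw [map_add, hKn, sub_add_cancel]
    · show L (n + R f) = f
      rw [map_add, hLn, hR f, zero_add]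

/-- Quotient equivalence: `E ⧸ ran (K|_{ker L}) ≃ (E × F) ⧸ ran (K ⊕ L)`. -/
noncomputable def quotEquivBB (K : X →L[ℂ] E) (L : X →L[ℂ] F) (R : F →L[ℂ] X)
    (hR : ∀ f, L (R f) = f) :
    (E ⧸ LinearMap.range (K.comp (Submodule.subtypeL (LinearMap.ker (L : X →ₗ[ℂ] F))) : LinearMap.ker (L : X →ₗ[ℂ] F) →ₗ[ℂ] E)) ≃ₗ[ℂ]
      ((E × F) ⧸ LinearMap.range (K.prod L : X →ₗ[ℂ] E × F)) := by
  set S : Submodule ℂ (E × F) := LinearMap.range (K.prod L : X →ₗ[ℂ] E × F) with hSdef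
  set φ : E →ₗ[ℂ] (E × F) ⧸ S := S.mkQ.comp (LinearMap.inl ℂ E F) with hφdef
  have hker : LinearMap.ker φ =
      LinearMap.range (K.comp (Submodule.subtypeL (LinearMap.ker (L : X →ₗ[ℂ] F))) : LinearMap.ker (L : X →ₗ[ℂ] F) →ₗ[ℂ] E) := by
    ext e
    simp only [hφdef, LinearMap.mem_ker, LinearMap.coe_comp, Function.comp_apply,
      LinearMap.inl_apply, Submodule.mkQ_apply, Submodule.Quotient.mk_eq_zero]
    exact (mem_rangeT_iff_BB K L e).symm
  have hsurj : Function.Surjective φ := by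
    intro y
    obtain ⟨⟨e, f⟩, rfl⟩ := Submodule.mkQ_surjective S y
    refine ⟨e - K (R f), ?_⟩
    simp only [hφdef, LinearMap.coe_comp, Function.comp_apply, LinearMap.inl_apply,
      Submodule.mkQ_apply]
    rw [Submodule.Quotient.eq]
    refine ⟨-(R f), ?_⟩
    have : (K.prod L : X →ₗ[ℂ] E × F) (-(R f)) = (K (-(R f)), L (-(R f))) := rfl
    rw [this, map_neg, map_neg, hR f]
    exact Prod.ext_iff.mpr ⟨by simp, by simp⟩
  exact (Submodule.quotEquivOfEq _ _ hker.symm).trans (φ.quotKerEquivOfSurjective hsurj)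

lemma isClosed_iff_BB (K : X →L[ℂ] E) (L : X →L[ℂ] F) (R : F →L[ℂ] X)
    (hR : ∀ f, L (R f) = f) :
    IsClosed (LinearMap.range (K.comp (Submodule.subtypeL (LinearMap.ker (L : X →ₗ[ℂ] F))) : LinearMap.ker (L : X →ₗ[ℂ] F) →ₗ[ℂ] E) : Set E) ↔
      IsClosed (LinearMap.range (K.prod L : X →ₗ[ℂ] E × F) : Set (E × F)) := by
  constructor
  · intro h
    rw [rangeS_eq_BB K L R hR]
    exact h.preimage (ContinuousLinearMap.fst ℂ E F -
      (K.comp R).comp (ContinuousLinearMap.snd ℂ E F)).continuous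
  · intro h
    rw [rangeT_eq_BB K L]
    exact h.preimage (ContinuousLinearMap.inl ℂ E F).continuous

end Aux

/-- Lemma A.1 (Bär–Ballmann): if `L : X → F` is a surjective bounded operator from a Hilbert
space and `K : X → E` is bounded, then `K|_{ker L}` and `K ⊕ L` have equal index. -/
theorem statement0
    {X E F : Type*} [NormedAddCommGroup X] [InnerProductSpace ℂ X] [CompleteSpace X]
    [NormedAddCommGroup E] [NormedSpace ℂ E] [CompleteSpace E]
    [NormedAddCommGroup F] [NormedSpace ℂ F] [CompleteSpace F]
    (K : X →L[ℂ] E) (L : X →L[ℂ] F) (hL : Function.Surjective L) :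
    EqualIndex (K.comp (Submodule.subtypeL (LinearMap.ker (L : X →ₗ[ℂ] F)))) (K.prod L) := by
  -- construct a continuous right inverse of `L`
  set N : Submodule ℂ X := LinearMap.ker (L : X →ₗ[ℂ] F) with hN
  have hNc : IsClosed (N : Set X) := ContinuousLinearMap.isClosed_ker L
  haveI : CompleteSpace N := hNc.completeSpace_coe
  obtain ⟨R, hR⟩ : ∃ R : F →L[ℂ] X, ∀ f, L (R f) = f := by
    set Lres : Nᗮ →L[ℂ] F := L.comp Nᗮ.subtypeL with hLres
    have hker : LinearMap.ker (Lres : Nᗮ →ₗ[ℂ] F) = ⊥ := by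
      rw [LinearMap.ker_eq_bot']
      intro ⟨m, hm⟩ hLm
      have hmN : m ∈ N := LinearMap.mem_ker.mpr (by simpa [Lres] using hLm)
      have : m = 0 := Submodule.disjoint_def.mp (Submodule.orthogonal_disjoint N) m hmN hm
      simpa using this
    have hrange : LinearMap.range (Lres : Nᗮ →ₗ[ℂ] F) = ⊤ := by
      rw [LinearMap.range_eq_top]
      intro f
      obtain ⟨u, hu⟩ := hL f
      have hcompl : IsCompl N Nᗮ := Submodule.isCompl_orthogonal_of_hasOrthogonalProjection
      have : u ∈ N ⊔ Nᗮ := by rw [hcompl.sup_eq_top]; trivial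
      obtain ⟨n, hn, m, hm, hnm⟩ := Submodule.mem_sup.mp this
      refine ⟨⟨m, hm⟩, ?_⟩
      have hLn : L n = 0 := LinearMap.mem_ker.mp hn
      simp only [Lres, ContinuousLinearMap.coe_comp', Function.comp_apply,
        Submodule.coe_subtypeL', Submodule.coe_subtype]
      have : L u = L n + L m := by rw [← map_add, hnm]
      rw [hu] at this
      rw [hLn, zero_add] at this
      exact this.symm
    set eq := ContinuousLinearEquiv.ofBijective Lres hker hrange with heq
    refine ⟨Nᗮ.subtypeL.comp (eq.symm : F →L[ℂ] Nᗮ), fun f => ?_⟩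
    have : Lres (eq.symm f) = f := by
      have := eq.apply_symm_apply f
      rwa [ContinuousLinearEquiv.coeFn_ofBijective] at this
    simpa [Lres] using this
  -- transfer the three Fredholm ingredients
  set T := K.comp (Submodule.subtypeL (LinearMap.ker (L : X →ₗ[ℂ] F))) with hT
  set S := K.prod L with hS
  have eker := kerEquivBB K L
  have equot := quotEquivBB K L R hR
  have hclosed := isClosed_iff_BB K L R hR
  have hfinker : FiniteDimensional ℂ (LinearMap.ker (T : LinearMap.ker (L : X →ₗ[ℂ] F) →ₗ[ℂ] E)) ↔ FiniteDimensional ℂ (LinearMap.ker (S : X →ₗ[ℂ] E × F)) :=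
    ⟨fun h => Module.Finite.equiv eker, fun h => Module.Finite.equiv eker.symm⟩
  have hfinquot : FiniteDimensional ℂ (E ⧸ LinearMap.range (T : LinearMap.ker (L : X →ₗ[ℂ] F) →ₗ[ℂ] E)) ↔
      FiniteDimensional ℂ ((E × F) ⧸ LinearMap.range (S : X →ₗ[ℂ] E × F)) :=
    ⟨fun h => Module.Finite.equiv equot, fun h => Module.Finite.equiv equot.symm⟩
  have hFred : IsFredholm T ↔ IsFredholm S := by
    unfold IsFredholm
    rw [hfinker, hfinquot, hclosed]
  have hidx : fredholmIndex T = fredholmIndex S := by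
    unfold fredholmIndex
    rw [eker.finrank_eq, equot.finrank_eq]
  by_cases h : IsFredholm T
  · exact Or.inl ⟨h, hFred.mp h, hidx⟩
  · exact Or.inr ⟨h, fun hs => h (hFred.mpr hs)⟩
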